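/- Let P be a complex polynomial of degree n with all zeros in the closed unit disk, λ₀, λ₁, λ₂ ∈ ℂ such that every zero of u(z) = λ₀ + C(n,1)λ₁ z + C(n,2)λ₂ z² lies in the half-plane |z| ≤ |z − n/2|, and define B[P](z) = λ₀P(z) + λ₁(nz/2)P′(z) + λ₂(nz/2)²P″(z)/2. If additionally all zeros of P lie in the open unit disk, then B[P] is not identically zero and all zeros of B[P] lie in the closed unit disk. -/

import Mathlib

open Polynomial Complex

private lemma msum_sub (s : Multiset ℂ) (f g : ℂ → ℂ) :
    (s.map (fun x => f x - g x)).sum = (s.map f).sum - (s.map g).sum := by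
  induction s using Multiset.induction_on with
  | empty => simp
  | cons a s ih => simp only [Multiset.map_cons, Multiset.sum_cons, ih]; ring

private lemma msum_const (s : Multiset ℂ) (k : ℂ) :
    (s.map (fun _ => k)).sum = (Multiset.card s : ℂ) * k := by
  induction s using Multiset.induction_on with
  | empty => simp
  | cons a s ih => simp only [Multiset.map_cons, Multiset.sum_cons, ih, Multiset.card_cons]
                   push_cast; ring

private lemma re_le_of_abs_le {w : ℂ} {ρ : ℝ} (hρ : 0 < ρ)
    (h : ‖w‖ ≤ ‖w - (ρ:ℂ)‖) : w.re ≤ ρ/2 := by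
  have h2 := pow_le_pow_left₀ (norm_nonneg w) h 2
  rw [Complex.sq_norm, Complex.sq_norm] at h2
  simp only [Complex.normSq_apply, Complex.sub_re, Complex.sub_im, Complex.ofReal_re,
    Complex.ofReal_im] at h2
  nlinarith

private lemma sum_re_ge (s : Multiset ℂ) (h : ∀ x ∈ s, 1/2 < x.re) :
    (Multiset.card s : ℝ)/2 ≤ s.sum.re := by
  induction s using Multiset.induction_on with
  | empty => simp
  | cons a s ih =>
    have ha := h a (Multiset.mem_cons_self a s)
    have hs := ih (fun x hx => h x (Multiset.mem_cons_of_mem hx))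
    simp only [Multiset.sum_cons, Complex.add_re, Multiset.card_cons]
    push_cast
    linarith

private lemma sum_re_gt (s : Multiset ℂ) (hs : s ≠ 0) (h : ∀ x ∈ s, 1/2 < x.re) :
    (Multiset.card s : ℝ)/2 < s.sum.re := by
  obtain ⟨a, ha⟩ := Multiset.exists_mem_of_ne_zero hs
  obtain ⟨t, rfl⟩ := Multiset.exists_cons_of_mem ha
  have h1 := h a (Multiset.mem_cons_self a t)
  have h2 := sum_re_ge t (fun x hx => h x (Multiset.mem_cons_of_mem hx))
  simp only [Multiset.sum_cons, Complex.add_re, Multiset.card_cons]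
  push_cast
  linarith

private lemma eval_msprod (s : Multiset ℂ) (w : ℂ) :
    eval w ((s.map (fun r => X - C r)).prod) = (s.map (fun r => w - r)).prod := by
  rw [Polynomial.eval_multiset_prod, Multiset.map_map]
  congr 1
  apply Multiset.map_congr rfl
  intro x _; simp

private lemma msprod_ne_zero (s : Multiset ℂ) (w : ℂ) (hw : ∀ r ∈ s, w ≠ r) :
    (s.map (fun r => w - r)).prod ≠ 0 := by
  apply Multiset.prod_ne_zero
  intro h0
  obtain ⟨r, hr, he⟩ := Multiset.mem_map.mp h0
  exact hw r hr (sub_eq_zero.mp he)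

private lemma eval_deriv_msprod (w : ℂ) : ∀ (s : Multiset ℂ), (∀ r ∈ s, w ≠ r) →
    eval w (derivative ((s.map (fun r => X - C r)).prod)) =
      (s.map (fun r => w - r)).prod * (s.map (fun r => (w - r)⁻¹)).sum := by
  intro s
  induction s using Multiset.induction_on with
  | empty => simp
  | cons a s ih =>
    intro hw
    have hwa : w - a ≠ 0 := sub_ne_zero.mpr (hw a (Multiset.mem_cons_self a s))
    have ihs := ih (fun r hr => hw r (Multiset.mem_cons_of_mem hr))
    simp only [Multiset.map_cons, Multiset.prod_cons, Multiset.sum_cons, derivative_mul]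
    rw [eval_add, eval_mul, eval_mul, eval_sub, eval_X, eval_C, ihs, eval_msprod]
    simp only [derivative_sub, derivative_X, derivative_C, sub_zero, eval_one]
    field_simp

private lemma eval_deriv2_msprod (w : ℂ) : ∀ (s : Multiset ℂ), (∀ r ∈ s, w ≠ r) →
    eval w (derivative (derivative ((s.map (fun r => X - C r)).prod))) =
      (s.map (fun r => w - r)).prod *
        (((s.map (fun r => (w - r)⁻¹)).sum)^2 - (s.map (fun r => ((w - r)⁻¹)^2)).sum) := by
  intro s
  induction s using Multiset.induction_on with
  | empty => simp
  | cons a s ih =>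
    intro hw
    have hwa : w - a ≠ 0 := sub_ne_zero.mpr (hw a (Multiset.mem_cons_self a s))
    have hw' : ∀ r ∈ s, w ≠ r := fun r hr => hw r (Multiset.mem_cons_of_mem hr)
    have ihs := ih hw'
    have ih1 := eval_deriv_msprod w s hw'
    simp only [Multiset.map_cons, Multiset.prod_cons, Multiset.sum_cons, derivative_mul,
      derivative_sub, derivative_X, derivative_C, sub_zero, derivative_one, one_mul]
    rw [derivative_add, derivative_mul]
    simp only [derivative_sub, derivative_X, derivative_C, sub_zero]
    rw [eval_add, eval_add, eval_mul, eval_mul, eval_sub, eval_X, eval_C, eval_one,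
      ihs, ih1]
    field_simp
    ring

example : True := trivial
noncomputable def Tlag (m : ℕ) (c : ℂ) (q : Polynomial ℂ) : Polynomial ℂ :=
  C ((m:ℂ)*c) * q - (1 + C c * X) * derivative q

private lemma natDegree_Tlag_le (m : ℕ) (hm : 1 ≤ m) (c : ℂ) (q : Polynomial ℂ)
    (h : q.natDegree ≤ m) : (Tlag m c q).natDegree ≤ m - 1 := by
  rw [Polynomial.natDegree_le_iff_coeff_eq_zero]
  intro N hN
  have hmN : m ≤ N := by omega
  obtain ⟨k, rfl⟩ : ∃ k, N = k + 1 := ⟨N - 1, by omega⟩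
  have h1 : q.coeff (k + 1 + 1) = 0 :=
    Polynomial.coeff_eq_zero_of_natDegree_lt (by omega)
  simp only [Tlag, Polynomial.coeff_sub, Polynomial.coeff_C_mul, add_mul, one_mul,
    Polynomial.coeff_add, mul_assoc, Polynomial.coeff_C_mul, Polynomial.coeff_X_mul,
    Polynomial.coeff_derivative, h1]
  rcases Nat.lt_or_ge m (k+1) with hcase | hcase
  · have h2 : q.coeff (k + 1) = 0 := Polynomial.coeff_eq_zero_of_natDegree_lt (by omega)
    simp [h2]
  · have hkm : k + 1 = m := by omega
    subst hkm
    push_cast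
    ring

private lemma keyineq {b c w : ℂ} (hb : 0 < b.re) (hc : 0 ≤ c.re) (hw : w.re ≤ 0)
    (h1 : 1 + c*w ≠ 0) :
    0 < ((1 - (starRingEnd ℂ) c * w) * ((1 + c*b)*(b-w)⁻¹)).re := by
  have hbw : b - w ≠ 0 := by
    intro h; rw [sub_eq_zero] at h; rw [← h] at hw; linarith
  have hns : 0 < Complex.normSq (b - w) := Complex.normSq_pos.mpr hbw
  have hmc : ((1 + c*b)*(b-w)⁻¹) * ((Complex.normSq (b-w) : ℝ) : ℂ)
      = (1 + c*b) * (starRingEnd ℂ) (b - w) := by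
    rw [← Complex.mul_conj]
    field_simp
  have hid : ((1 - (starRingEnd ℂ) c * w) * ((1 + c*b)*(b-w)⁻¹)).re * Complex.normSq (b - w)
      = b.re * Complex.normSq (1 + c*w) - w.re * Complex.normSq (1 + c*b)
        + c.re * Complex.normSq (b - w) := by
    have : ((1 - (starRingEnd ℂ) c * w) * ((1 + c*b)*(b-w)⁻¹)).re * Complex.normSq (b - w)
        = (((1 - (starRingEnd ℂ) c * w) * ((1 + c*b)*(b-w)⁻¹)) * ((Complex.normSq (b-w) : ℝ) : ℂ)).re := by
      simp [Complex.mul_re, Complex.ofReal_re, Complex.ofReal_im]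
    rw [this, mul_assoc, hmc]
    simp only [Complex.mul_re, Complex.mul_im, Complex.normSq_apply, Complex.sub_re,
      Complex.sub_im, Complex.add_re, Complex.add_im, Complex.one_re, Complex.one_im,
      Complex.conj_re, Complex.conj_im]
    ring
  have hpos : 0 < b.re * Complex.normSq (1 + c*w) - w.re * Complex.normSq (1 + c*b)
      + c.re * Complex.normSq (b - w) := by
    have l1 : 0 < Complex.normSq (1 + c*w) := Complex.normSq_pos.mpr h1
    have l2 : 0 ≤ Complex.normSq (1 + c*b) := Complex.normSq_nonneg _
    have l3 : 0 ≤ Complex.normSq (b - w) := Complex.normSq_nonneg _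
    nlinarith
  nlinarith [hid, hpos, hns]

private lemma psi_sum (c w : ℂ) : ∀ (s : Multiset ℂ),
    ((1 - (starRingEnd ℂ) c * w) * s.sum).re
      = (s.map (fun x => ((1 - (starRingEnd ℂ) c * w) * x).re)).sum := by
  intro s
  induction s using Multiset.induction_on with
  | empty => simp
  | cons a s ih => simp [mul_add, Complex.add_re, ih]

private lemma msum_pos (s : Multiset ℝ) (hs : s ≠ 0) (h : ∀ x ∈ s, 0 < x) : 0 < s.sum := by
  obtain ⟨a, ha⟩ := Multiset.exists_mem_of_ne_zero hs
  obtain ⟨t, rfl⟩ := Multiset.exists_cons_of_mem ha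
  have h1 := h a (Multiset.mem_cons_self a t)
  have h2 : 0 ≤ t.sum := Multiset.sum_nonneg (fun x hx => le_of_lt (h x (Multiset.mem_cons_of_mem hx)))
  rw [Multiset.sum_cons]
  linarith

private lemma TlagEval (m : ℕ) (hm : 1 ≤ m) (q : Polynomial ℂ) (hq : q ≠ 0)
    (hdq : q.natDegree ≤ m) (c : ℂ) (hc : 0 ≤ c.re)
    (hnd : 1 ≤ q.natDegree ∨ c ≠ 0)
    (hroots : ∀ x ∈ q.roots, 0 < x.re) (w : ℂ) (hw : w.re ≤ 0) :
    eval w (Tlag m c q) ≠ 0 := by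
  have hcard : Multiset.card q.roots = q.natDegree :=
    Polynomial.splits_iff_card_roots.mp (IsAlgClosed.splits q)
  have hsplit := Polynomial.C_leadingCoeff_mul_prod_multiset_X_sub_C hcard
  set s := q.roots with hs
  have hws : ∀ r ∈ s, w ≠ r := by
    intro r hr hrw
    have := hroots r hr
    rw [← hrw] at this
    linarith
  set Pi := (s.map (fun r => w - r)).prod with hPi
  set S := (s.map (fun r => (w - r)⁻¹)).sum with hS
  have hPine : Pi ≠ 0 := msprod_ne_zero s w hws
  have hlc : q.leadingCoeff ≠ 0 := Polynomial.leadingCoeff_ne_zero.mpr hq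
  have hevq : eval w q = q.leadingCoeff * Pi := by
    conv_lhs => rw [← hsplit]
    rw [eval_mul, eval_C, eval_msprod]
  have hevq' : eval w (derivative q) = q.leadingCoeff * (Pi * S) := by
    conv_lhs => rw [← hsplit, Polynomial.derivative_C_mul]
    rw [eval_mul, eval_C, eval_deriv_msprod w s hws]
  have hevT : eval w (Tlag m c q) = q.leadingCoeff * Pi * ((m:ℂ)*c - (1 + c*w)*S) := by
    simp only [Tlag, eval_sub, eval_mul, eval_add, eval_one, eval_C, eval_X, hevq, hevq']
    ring
  rw [hevT]
  apply mul_ne_zero (mul_ne_zero hlc hPine)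
  by_cases h1 : 1 + c*w = 0
  · rw [h1, zero_mul, sub_zero]
    have hcne : c ≠ 0 := by intro h0; rw [h0] at h1; simp at h1
    exact mul_ne_zero (Nat.cast_ne_zero.mpr (by omega)) hcne
  by_cases hd : s = 0
  · have hS0 : S = 0 := by simp [hS, hd]
    rw [hS0, mul_zero, sub_zero]
    have hd0 : q.natDegree = 0 := by rw [← hcard, hd]; simp
    have hcne : c ≠ 0 := by
      rcases hnd with h | h
      · omega
      · exact h
    exact mul_ne_zero (Nat.cast_ne_zero.mpr (by omega)) hcne
  · -- main case : linear functional argument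
    set d := Multiset.card s with hdcard
    have hdm : d ≤ m := by rw [hcard]; exact hdq
    have hbr : (m:ℂ)*c - (1 + c*w)*S
        = (s.map (fun b => (1 + c*b) * (b - w)⁻¹)).sum + (((m - d : ℕ)):ℂ)*c := by
      have hcongr : s.map (fun b => (1 + c*b) * (b - w)⁻¹)
          = s.map (fun b => c - (1 + c*w) * (w - b)⁻¹) := by
        apply Multiset.map_congr rfl
        intro b hb
        have hbw : w - b ≠ 0 := sub_ne_zero.mpr (hws b hb)
        have hbw' : b - w ≠ 0 := fun h => hbw (by linear_combination -h)
        field_simp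
        ring
      rw [hcongr, msum_sub s (fun _ => c) (fun b => (1 + c*w) * (w - b)⁻¹),
        msum_const, Multiset.sum_map_mul_left]
      rw [← hS]
      have : ((m - d : ℕ) : ℂ) = (m : ℂ) - (d : ℂ) := by
        push_cast [Nat.cast_sub hdm]; ring
      rw [this]
      ring
    rw [hbr]
    intro h0
    have hψ : ((1 - (starRingEnd ℂ) c * w) *
        ((s.map (fun b => (1 + c*b) * (b - w)⁻¹)).sum + (((m - d : ℕ)):ℂ)*c)).re = 0 := by
      rw [h0, mul_zero]; simp
    rw [mul_add, Complex.add_re, psi_sum] at hψ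
    have hG : 0 < ((s.map (fun b => (1 + c*b) * (b - w)⁻¹)).map
        (fun x => ((1 - (starRingEnd ℂ) c * w) * x).re)).sum := by
      rw [Multiset.map_map]
      apply msum_pos
      · simp [hd]
      · intro x hx
        obtain ⟨b, hb, rfl⟩ := Multiset.mem_map.mp hx
        exact keyineq (hroots b hb) hc hw h1
    have hC : 0 ≤ ((1 - (starRingEnd ℂ) c * w) * ((((m - d : ℕ)):ℂ)*c)).re := by
      have : ((1 - (starRingEnd ℂ) c * w) * ((((m - d : ℕ)):ℂ)*c)).re
          = ((m - d : ℕ) : ℝ) * (c.re - w.re * Complex.normSq c) := by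
        simp only [Complex.mul_re, Complex.mul_im, Complex.sub_re, Complex.sub_im,
          Complex.one_re, Complex.one_im, Complex.natCast_re, Complex.natCast_im,
          Complex.conj_re, Complex.conj_im, Complex.normSq_apply]
        ring
      rw [this]
      have : 0 ≤ c.re - w.re * Complex.normSq c := by nlinarith [Complex.normSq_nonneg c]
      positivity
    linarith
private lemma auxT (n : ℕ) (hn : 2 ≤ n) (p : Polynomial ℂ) (hmon : p.Monic)
    (hdeg : p.natDegree = n) (hroots : ∀ x ∈ p.roots, 0 < x.re)
    (c₁ c₂ : ℂ) (hc₁ : 0 ≤ c₁.re) (hc₂ : 0 ≤ c₂.re) (hswap : c₂ ≠ 0 ∨ c₁ = 0) :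
    eval 0 (Tlag (n-1) c₂ (Tlag n c₁ p)) ≠ 0 := by
  have hp : p ≠ 0 := hmon.ne_zero
  have stage1 : ∀ w : ℂ, w.re ≤ 0 → eval w (Tlag n c₁ p) ≠ 0 := fun w hw =>
    TlagEval n (by omega) p hp (le_of_eq hdeg) c₁ hc₁ (Or.inl (by omega)) hroots w hw
  have hq₁ne : Tlag n c₁ p ≠ 0 := by
    intro h0
    exact stage1 0 (by norm_num) (by rw [h0]; simp)
  have hq₁roots : ∀ x ∈ (Tlag n c₁ p).roots, 0 < x.re := by
    intro x hx
    have hxr := (Polynomial.mem_roots'.mp hx).2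
    by_contra hle
    exact stage1 x (by linarith [not_lt.mp hle]) hxr
  have hq₁deg : (Tlag n c₁ p).natDegree ≤ n - 1 :=
    natDegree_Tlag_le n (by omega) c₁ p (le_of_eq hdeg)
  have hnd2 : 1 ≤ (Tlag n c₁ p).natDegree ∨ c₂ ≠ 0 := by
    rcases hswap with h | h
    · exact Or.inr h
    · left
      have hq1eq : Tlag n c₁ p = -derivative p := by
        rw [Tlag, h]; simp
      rw [hq1eq, natDegree_neg]
      have hcoeff : (derivative p).coeff (n-1) ≠ 0 := by
        rw [Polynomial.coeff_derivative]
        have he : n - 1 + 1 = n := by omega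
        rw [he]
        have hc : p.coeff n = 1 := by
          rw [← hdeg]; exact hmon.coeff_natDegree
        rw [hc, one_mul]
        have he2 : (((n-1:ℕ)):ℂ) + 1 = (n:ℂ) := by
          push_cast [Nat.cast_sub (by omega : 1 ≤ n)]; ring
        rw [he2]
        exact Nat.cast_ne_zero.mpr (by omega)
      calc 1 ≤ n - 1 := by omega
        _ ≤ _ := Polynomial.le_natDegree_of_ne_zero hcoeff
  exact TlagEval (n-1) (by omega) (Tlag n c₁ p) hq₁ne hq₁deg c₂ hc₂ hnd2 hq₁roots 0 (by norm_num)

private lemma evalTT (n : ℕ) (hn : 1 ≤ n) (c d : ℂ) (p : Polynomial ℂ) :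
    eval 0 (Tlag (n-1) d (Tlag n c p))
      = (n:ℂ)*((n:ℂ)-1)*c*d*(eval 0 p) - ((n:ℂ)-1)*(c+d)*(eval 0 (derivative p))
        + eval 0 (derivative (derivative p)) := by
  have h1 : (((n-1 : ℕ)):ℂ) = (n:ℂ) - 1 := by
    push_cast [Nat.cast_sub hn]; ring
  simp only [Tlag, derivative_sub, derivative_mul, derivative_add, derivative_one,
    derivative_C_mul, derivative_X, derivative_C, eval_sub, eval_mul, eval_add,
    eval_one, eval_C, eval_X, eval_zero, h1]
  ring
private lemma quad_roots (K b g : ℂ) (hK : K ≠ 0) :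
    ∃ s₁ s₂ : ℂ, K*(s₁+s₂) = -b ∧ K*(s₁*s₂) = g := by
  obtain ⟨d, hd⟩ := IsAlgClosed.exists_pow_nat_eq (b^2 - 4*K*g) (n := 2) (by norm_num)
  refine ⟨(-b+d)/(2*K), (-b-d)/(2*K), ?_, ?_⟩
  · field_simp
    ring
  · field_simp
    linear_combination -hd

private lemma nat_one_sum (s : Multiset ℂ) : (s.map (fun _ => (1:ℕ))).sum = Multiset.card s := by
  induction s using Multiset.induction_on with
  | empty => simp
  | cons a s ih => simp [ih, Nat.add_comm]

private lemma core (n : ℕ) (hn : 1 ≤ n) (lam0 lam1 lam2 : ℂ)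
    (hu : ∀ w : ℂ,
      lam0 + (n.choose 1 : ℂ) * lam1 * w + (n.choose 2 : ℂ) * lam2 * w ^ 2 = 0 →
      ‖w‖ ≤ ‖w - (n : ℂ) / 2‖)
    (t : Multiset ℂ) (hcard : Multiset.card t = n) (ht : ∀ x ∈ t, 1/2 < x.re) :
    lam0 + ((n:ℂ) * lam1/2) * t.sum
      + ((n:ℂ)^2 * lam2/8) * ((t.sum)^2 - (t.map (fun x => x^2)).sum) ≠ 0 := by
  have hn0 : (n:ℂ) ≠ 0 := Nat.cast_ne_zero.mpr (by omega)
  have hnR : (1:ℝ) ≤ (n:ℝ) := by exact_mod_cast hn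
  have hch1 : (n.choose 1 : ℂ) = (n:ℂ) := by rw [Nat.choose_one_right]
  have hch2 : (n.choose 2 : ℂ) * 2 = (n:ℂ) * ((n:ℂ) - 1) := by
    have h2 : n.choose 2 * 2 = n * (n-1) := by
      rw [Nat.choose_two_right]
      refine Nat.div_mul_cancel ?_
      obtain ⟨m, rfl⟩ : ∃ m, n = m + 1 := ⟨n-1, by omega⟩
      simpa [Nat.mul_comm] using (Nat.even_mul_succ_self m).two_dvd
    have := congrArg (Nat.cast : ℕ → ℂ) h2
    push_cast [Nat.cast_sub hn] at this
    linear_combination this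
  -- zeros of the "symbol" have real part ≤ 1/2
  have hu' : ∀ s : ℂ,
      lam0 + ((n:ℂ)^2*lam1/2)*s + ((n:ℂ)^3*((n:ℂ)-1)*lam2/8)*s^2 = 0 → s.re ≤ 1/2 := by
    intro s hgs
    have habs := hu ((n:ℂ)*s/2) (by
      rw [hch1]
      linear_combination hgs + lam2*(n:ℂ)^2*s^2/8 * hch2)
    have hnn : (0:ℝ) < (n:ℝ)/2 := by linarith
    have hw : ((n:ℂ)*s/2) = ((((n:ℝ)/2 : ℝ)):ℂ)*s := by push_cast; ring
    have hcast : ((n:ℂ))/2 = (((((n:ℝ)/2) : ℝ)):ℂ) := by push_cast; ring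
    rw [hw, hcast] at habs
    have := re_le_of_abs_le hnn habs
    rw [Complex.re_ofReal_mul] at this
    nlinarith
  set T1 := t.sum with hT1
  set T2 := (t.map (fun x => x^2)).sum with hT2
  have htne : t ≠ 0 := by
    intro h0; rw [h0] at hcard; simp at hcard; omega
  have hT1re : (n:ℝ)/2 < T1.re := by
    have := sum_re_gt t htne ht
    rwa [hcard] at this
  by_cases hK : (n:ℂ)^3*((n:ℂ)-1)*lam2/8 = 0
  -- degenerate case: the quadratic term is absent
  · have hfac : (n:ℂ) - 1 = 0 ∨ lam2 = 0 := by
      have h8 : (n:ℂ)^3*((n:ℂ)-1)*lam2 = 0 := by linear_combination 8*hK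
      rcases mul_eq_zero.mp h8 with h | h
      · rcases mul_eq_zero.mp h with h' | h'
        · exact absurd h' (pow_ne_zero 3 hn0)
        · exact Or.inl h'
      · exact Or.inr h
    have hch2lam2 : (n.choose 2 : ℂ) * lam2 = 0 := by
      rcases hfac with h | h
      · have hn1 : n = 1 := by
          have h1 : (n:ℂ) = 1 := by linear_combination h
          exact_mod_cast h1
        subst hn1
        norm_num
      · rw [h, mul_zero]
    have hquadzero : ((n:ℂ)^2 * lam2/8) * ((T1)^2 - T2) = 0 := by
      rcases hfac with h | h
      · have hn1 : n = 1 := by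
          have h1 : (n:ℂ) = 1 := by linear_combination h
          exact_mod_cast h1
        obtain ⟨x, hx⟩ := Multiset.card_eq_one.mp (by rw [hcard, hn1])
        rw [hT1, hT2, hx]
        simp
      · rw [h]; ring
    intro hF
    rw [hquadzero, add_zero] at hF
    by_cases hl1 : lam1 = 0
    · rw [hl1] at hF
      simp only [mul_zero, zero_mul, mul_comm, zero_div, add_zero] at hF
      have hF0 : lam0 = 0 := by linear_combination hF
      have habs := hu (n:ℂ) (by
        linear_combination hF0 + (n.choose 1:ℂ)*(n:ℂ)*hl1 + (n:ℂ)^2*hch2lam2)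
      have hc1 : (n:ℂ) - (n:ℂ)/2 = ((((n:ℝ)/2):ℝ):ℂ) := by push_cast; ring
      rw [hc1] at habs
      rw [Complex.norm_natCast, Complex.norm_real, Real.norm_eq_abs] at habs
      rw [_root_.abs_of_nonneg (by linarith : (0:ℝ) ≤ (n:ℝ)/2)] at habs
      linarith
    · have hprem : lam0 + (n.choose 1:ℂ)*lam1*(T1/2) + (n.choose 2:ℂ)*lam2*(T1/2)^2 = 0 := by
        linear_combination hF + (lam1*T1/2)*hch1 + (T1^2/4)*hch2lam2
      have habs := hu (T1/2) hprem
      have hc1 : ((n:ℂ))/2 = ((((n:ℝ)/2):ℝ):ℂ) := by push_cast; ring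
      rw [hc1] at habs
      have hre := re_le_of_abs_le (by linarith : (0:ℝ) < (n:ℝ)/2) habs
      have h2 : (T1/2) = (((1/2:ℝ)):ℂ)*T1 := by push_cast; ring
      rw [h2, Complex.re_ofReal_mul] at hre
      linarith
  · -- main case : quadratic symbol, two Laguerre steps
    set K := (n:ℂ)^3*((n:ℂ)-1)*lam2/8 with hKdef
    have hn1c : (n:ℂ) - 1 ≠ 0 := by
      intro h; apply hK; rw [hKdef, h]; ring
    have hn2 : 2 ≤ n := by
      by_contra hcon
      have hne1 : n = 1 := by omega
      subst hne1
      exact hn1c (by norm_num)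
    obtain ⟨s₁, s₂, hsum2, hprod2⟩ := quad_roots K ((n:ℂ)^2*lam1/2) lam0 hK
    have hres1 : s₁.re ≤ 1/2 := hu' s₁ (by
      rw [hKdef] at hprod2 hsum2
      linear_combination s₁*hsum2 - hprod2)
    have hres2 : s₂.re ≤ 1/2 := hu' s₂ (by
      rw [hKdef] at hprod2 hsum2
      linear_combination s₂*hsum2 - hprod2)
    set c₁ := ((1/2:ℝ):ℂ) - s₁ with hc₁def
    set c₂ := ((1/2:ℝ):ℂ) - s₂ with hc₂def
    have hc₁re : 0 ≤ c₁.re := by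
      rw [hc₁def, Complex.sub_re, Complex.ofReal_re]; linarith
    have hc₂re : 0 ≤ c₂.re := by
      rw [hc₂def, Complex.sub_re, Complex.ofReal_re]; linarith
    -- the auxiliary polynomial with roots (x - 1/2)⁻¹
    set bms := t.map (fun x => (x - 1/2)⁻¹) with hbms
    have hbre : ∀ r ∈ bms, 0 < r.re := by
      intro r hr
      obtain ⟨x, hx, rfl⟩ := Multiset.mem_map.mp hr
      have hxre := ht x hx
      have hrex : 0 < (x - 1/2).re := by
        rw [Complex.sub_re]
        norm_num
        linarith
      have hne : x - 1/2 ≠ 0 := by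
        intro h0; rw [h0] at hrex; simp at hrex
      rw [Complex.inv_re]
      exact div_pos hrex (Complex.normSq_pos.mpr hne)
    set ptil := ((bms.map (fun r => X - C r)).prod : Polynomial ℂ) with hptil
    have hmon : ptil.Monic :=
      Polynomial.monic_multiset_prod_of_monic _ _ (fun r _ => Polynomial.monic_X_sub_C r)
    have hdegp : ptil.natDegree = n := by
      rw [hptil, Polynomial.natDegree_multiset_prod_of_monic]
      · rw [Multiset.map_map]
        have : (Multiset.map (Polynomial.natDegree ∘ fun r => X - C r) bms)
            = Multiset.map (fun _ => (1:ℕ)) bms := by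
          apply Multiset.map_congr rfl
          intro r _
          simp [Polynomial.natDegree_X_sub_C]
        rw [this, nat_one_sum, hbms, Multiset.card_map, hcard]
      · intro f hf
        obtain ⟨r, _, rfl⟩ := Multiset.mem_map.mp hf
        exact Polynomial.monic_X_sub_C r
    have hrootsp : ∀ x ∈ ptil.roots, 0 < x.re := by
      intro x hx
      have hxr := (Polynomial.mem_roots'.mp hx).2
      rw [Polynomial.IsRoot, hptil, eval_msprod] at hxr
      rw [Multiset.prod_eq_zero_iff] at hxr
      obtain ⟨r, hr, he⟩ := Multiset.mem_map.mp hxr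
      have hxeq : x = r := by
        have := sub_eq_zero.mp he
        exact this
      rw [hxeq]
      exact hbre r hr
    -- evaluations of ptil and its derivatives at 0
    have h0mem : ∀ r ∈ bms, (0:ℂ) ≠ r := by
      intro r hr h0
      have := hbre r hr
      rw [← h0] at this
      simp at this
    set A1 := (t.map (fun x => x - 1/2)).sum with hA1
    set A2 := (t.map (fun x => (x - 1/2)^2)).sum with hA2
    have hmapinv : bms.map (fun r => ((0:ℂ) - r)⁻¹) = t.map (fun x => -(x - 1/2)) := by
      rw [hbms, Multiset.map_map]
      apply Multiset.map_congr rfl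
      intro x _
      show (0 - (x - 1/2)⁻¹)⁻¹ = -(x - 1/2)
      rw [zero_sub, inv_neg, inv_inv]
    have hmapinv2 : bms.map (fun r => (((0:ℂ) - r)⁻¹)^2) = t.map (fun x => (x - 1/2)^2) := by
      rw [hbms, Multiset.map_map]
      apply Multiset.map_congr rfl
      intro x _
      show ((0 - (x - 1/2)⁻¹)⁻¹)^2 = (x - 1/2)^2
      rw [zero_sub, inv_neg, inv_inv]
      ring
    have hSb : (bms.map (fun r => ((0:ℂ) - r)⁻¹)).sum = -A1 := by
      rw [hmapinv, hA1]
      have := msum_sub t (fun _ => (0:ℂ)) (fun x => x - 1/2)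
      simp only [zero_sub] at this
      rw [this, msum_const]
      ring
    have hSb2 : (bms.map (fun r => (((0:ℂ) - r)⁻¹)^2)).sum = A2 := by
      rw [hmapinv2, hA2]
    set P0 := eval 0 ptil with hP0
    have hP0v : P0 = (bms.map (fun r => (0:ℂ) - r)).prod := by
      rw [hP0, hptil, eval_msprod]
    have hP0ne : P0 ≠ 0 := by
      rw [hP0v]; exact msprod_ne_zero bms 0 h0mem
    have hP1 : eval 0 (derivative ptil) = P0 * (-A1) := by
      rw [hptil, eval_deriv_msprod 0 bms h0mem, hSb, ← hP0v]
    have hP2 : eval 0 (derivative (derivative ptil)) = P0 * (A1^2 - A2) := by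
      rw [hptil, eval_deriv2_msprod 0 bms h0mem, hSb, hSb2, ← hP0v]
      ring
    have hbrac : (n:ℂ)*((n:ℂ)-1)*c₁*c₂*P0 - ((n:ℂ)-1)*(c₁+c₂)*(P0*(-A1))
        + P0*(A1^2-A2) ≠ 0 := by
      by_cases hc2z : c₂ = 0
      · have hval := auxT n hn2 ptil hmon hdegp hrootsp c₂ c₁ hc₂re hc₁re (Or.inr hc2z)
        rw [evalTT n hn c₂ c₁ ptil, hP1, hP2, ← hP0] at hval
        exact fun h => hval (by linear_combination h)
      · have hval := auxT n hn2 ptil hmon hdegp hrootsp c₁ c₂ hc₁re hc₂re (Or.inl hc2z)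
        rw [evalTT n hn c₁ c₂ ptil, hP1, hP2, ← hP0] at hval
        exact fun h => hval (by linear_combination h)
    intro hF
    apply hbrac
    have hA1T : A1 = T1 - (n:ℂ)/2 := by
      rw [hA1, msum_sub t (fun x => x) (fun _ => (1/2:ℂ)), msum_const, hcard,
        Multiset.map_id', ← hT1]
      ring
    have hA2T : A2 = T2 - T1 + (n:ℂ)/4 := by
      have hcg : t.map (fun x => (x - 1/2)^2) = t.map (fun x => x^2 - (x - 1/4)) := by
        apply Multiset.map_congr rfl
        intro x _
        ring
      rw [hA2, hcg, msum_sub t (fun x => x^2) (fun x => x - 1/4),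
        msum_sub t (fun x => x) (fun _ => (1/4:ℂ)), msum_const, hcard,
        Multiset.map_id', ← hT1, ← hT2]
      ring
    rw [hKdef] at hsum2 hprod2
    have key : (n:ℂ)*((n:ℂ)-1)*(lam0 + ((n:ℂ)*lam1/2)*T1 + ((n:ℂ)^2*lam2/8)*(T1^2 - T2))
        = K * ((n:ℂ)*((n:ℂ)-1)*c₁*c₂ + ((n:ℂ)-1)*(c₁+c₂)*A1 + (A1^2 - A2)) := by
      rw [hc₁def, hc₂def, hA1T, hA2T, hKdef]
      push_cast
      linear_combination (((n:ℂ)-1)*T1) * hsum2 - ((n:ℂ)*((n:ℂ)-1)) * hprod2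
    have hz : K * ((n:ℂ)*((n:ℂ)-1)*c₁*c₂ + ((n:ℂ)-1)*(c₁+c₂)*A1 + (A1^2 - A2)) = 0 := by
      rw [← key, hF, mul_zero]
    have hbz : (n:ℂ)*((n:ℂ)-1)*c₁*c₂ + ((n:ℂ)-1)*(c₁+c₂)*A1 + (A1^2 - A2) = 0 := by
      rcases mul_eq_zero.mp hz with h | h
      · exact absurd h hK
      · exact h
    linear_combination P0 * hbz
private lemma choose1C (n : ℕ) : (n.choose 1 : ℂ) = (n:ℂ) := by rw [Nat.choose_one_right]

private lemma choose2C (n : ℕ) (hn : 1 ≤ n) : (n.choose 2 : ℂ) * 2 = (n:ℂ) * ((n:ℂ) - 1) := by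
  have h2 : n.choose 2 * 2 = n * (n-1) := by
    rw [Nat.choose_two_right]
    refine Nat.div_mul_cancel ?_
    obtain ⟨m, rfl⟩ : ∃ m, n = m + 1 := ⟨n-1, by omega⟩
    simpa [Nat.mul_comm] using (Nat.even_mul_succ_self m).two_dvd
  have := congrArg (Nat.cast : ℕ → ℂ) h2
  push_cast [Nat.cast_sub hn] at this
  linear_combination this

theorem stmt_19 (P : Polynomial ℂ) (n : ℕ) (hn : 1 ≤ n) (hdeg : P.natDegree = n)
    (lam0 lam1 lam2 : ℂ)
    (hu : ∀ w : ℂ,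
      lam0 + (n.choose 1 : ℂ) * lam1 * w + (n.choose 2 : ℂ) * lam2 * w ^ 2 = 0 →
      ‖w‖ ≤ ‖w - (n : ℂ) / 2‖)
    (B : Polynomial ℂ)
    (hB : B = Polynomial.C lam0 * P +
      Polynomial.C (lam1 * ((n : ℂ) / 2)) * (Polynomial.X * P.derivative) +
      Polynomial.C (lam2 * ((n : ℂ) / 2) ^ 2 / 2) *
        (Polynomial.X ^ 2 * P.derivative.derivative))
    (hroots : ∀ w : ℂ, P.eval w = 0 → ‖w‖ < 1) :
    B ≠ 0 ∧ ∀ z : ℂ, B.eval z = 0 → ‖z‖ ≤ 1 := by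
  have hPne : P ≠ 0 := by
    intro h0
    rw [h0, Polynomial.natDegree_zero] at hdeg
    omega
  have hlcne : P.coeff n ≠ 0 := by
    rw [← hdeg, Polynomial.coeff_natDegree]
    exact Polynomial.leadingCoeff_ne_zero.mpr hPne
  have huval : lam0 + (n.choose 1 : ℂ)*lam1*((n:ℂ)/2) + (n.choose 2 : ℂ)*lam2*((n:ℂ)/2)^2 ≠ 0 := by
    intro h0
    have habs := hu ((n:ℂ)/2) h0
    rw [sub_self] at habs
    simp only [norm_zero] at habs
    have h2 : ‖(n:ℂ)/2‖ = 0 := le_antisymm habs (norm_nonneg _)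
    rw [norm_div, Complex.norm_natCast] at h2
    have : ‖(2:ℂ)‖ = 2 := by norm_num
    rw [this] at h2
    have hn0 : n = 0 := by
      field_simp at h2
      exact_mod_cast h2
    omega
  constructor
  · -- B ≠ 0 : the coefficient of degree n is nonzero
    intro hB0
    have hcoefB : B.coeff n = P.coeff n *
        (lam0 + (n.choose 1 : ℂ)*lam1*((n:ℂ)/2) + (n.choose 2 : ℂ)*lam2*((n:ℂ)/2)^2) := by
      rcases Nat.lt_or_ge n 2 with hlt | hge
      · -- n = 1
        have hn1 : n = 1 := by omega
        subst hn1
        have hd1 : (derivative P).natDegree = 0 := by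
          have := Polynomial.natDegree_derivative_le P
          omega
        have hd0 : derivative (derivative P) = 0 := by
          obtain ⟨a, ha⟩ := Polynomial.natDegree_eq_zero.mp hd1
          rw [← ha, Polynomial.derivative_C]
        have hX1 : (X * derivative P).coeff 1 = P.coeff 1 := by
          rw [show (1:ℕ) = 0 + 1 from rfl, Polynomial.coeff_X_mul,
            Polynomial.coeff_derivative]
          norm_num
        rw [hB, hd0]
        simp only [mul_zero, Polynomial.coeff_add, Polynomial.coeff_C_mul, hX1,
          Polynomial.coeff_zero]
        norm_num [Nat.choose]
        ring
      · -- n ≥ 2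
        obtain ⟨k, rfl⟩ : ∃ k, n = k + 2 := ⟨n-2, by omega⟩
        have hX1 : (X * derivative P).coeff (k+2) = P.coeff (k+2) * ((k:ℂ)+2) := by
          rw [show k+2 = (k+1)+1 from rfl, Polynomial.coeff_X_mul,
            Polynomial.coeff_derivative]
          push_cast
          ring
        have hX2 : (X^2 * derivative (derivative P)).coeff (k+2)
            = P.coeff (k+2) * (((k:ℂ)+2) * ((k:ℂ)+1)) := by
          have h := Polynomial.coeff_X_pow_mul (derivative (derivative P)) 2 k
          rw [h, Polynomial.coeff_derivative, Polynomial.coeff_derivative]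
          push_cast
          ring
        have hc1 := choose1C (k+2)
        have hc2 := choose2C (k+2) (by omega)
        push_cast at hc1 hc2
        have hc2' : (((k+2).choose 2 : ℕ):ℂ) = ((k:ℂ)+2)*((k:ℂ)+1)/2 := by
          linear_combination hc2/2
        rw [hB]
        simp only [Polynomial.coeff_add, Polynomial.coeff_C_mul, hX1, hX2]
        push_cast
        rw [hc1, hc2']
        ring
    rw [hB0] at hcoefB
    simp only [Polynomial.coeff_zero] at hcoefB
    exact (mul_ne_zero hlcne huval) hcoefB.symm
  · -- all zeros of B lie in the closed unit disk
    intro z hz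
    by_contra hz1
    push_neg at hz1
    have hcardr : Multiset.card P.roots = P.natDegree :=
      Polynomial.splits_iff_card_roots.mp (IsAlgClosed.splits P)
    have hsplit := Polynomial.C_leadingCoeff_mul_prod_multiset_X_sub_C hcardr
    set s := P.roots with hs
    have hrabs : ∀ r ∈ s, ‖r‖ < 1 := by
      intro r hr
      exact hroots r ((Polynomial.mem_roots'.mp hr).2)
    have hzr : ∀ r ∈ s, z ≠ r := by
      intro r hr h0
      have := hrabs r hr
      rw [← h0] at this
      linarith
    set Pi := (s.map (fun r => z - r)).prod with hPi
    set S := (s.map (fun r => (z - r)⁻¹)).sum with hS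
    set S2 := (s.map (fun r => ((z - r)⁻¹)^2)).sum with hS2
    have hPine : Pi ≠ 0 := msprod_ne_zero s z hzr
    have hlc : P.leadingCoeff ≠ 0 := Polynomial.leadingCoeff_ne_zero.mpr hPne
    have hPz : eval z P = P.leadingCoeff * Pi := by
      conv_lhs => rw [← hsplit]
      rw [eval_mul, eval_C, eval_msprod]
    have hP1z : eval z (derivative P) = P.leadingCoeff * (Pi * S) := by
      conv_lhs => rw [← hsplit, Polynomial.derivative_C_mul]
      rw [eval_mul, eval_C, eval_deriv_msprod z s hzr]
    have hP2z : eval z (derivative (derivative P))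
        = P.leadingCoeff * (Pi * (S^2 - S2)) := by
      conv_lhs => rw [← hsplit, Polynomial.derivative_C_mul, Polynomial.derivative_C_mul]
      rw [eval_mul, eval_C, eval_deriv2_msprod z s hzr]
    have hFz : lam0 + ((n:ℂ)*lam1/2)*(z*S) + ((n:ℂ)^2*lam2/8)*((z*S)^2 - z^2*S2) = 0 := by
      have h1 : eval z B = P.leadingCoeff * Pi *
          (lam0 + ((n:ℂ)*lam1/2)*(z*S) + ((n:ℂ)^2*lam2/8)*((z*S)^2 - z^2*S2)) := by
        rw [hB]
        simp only [eval_add, eval_mul, eval_C, eval_X, eval_pow, hPz, hP1z, hP2z]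
        ring
      rw [hz] at h1
      rcases mul_eq_zero.mp h1.symm with h | h
      · exact absurd h (mul_ne_zero hlc hPine)
      · exact h
    -- apply the core lemma to the Möbius-transformed roots
    set tm := s.map (fun r => z*(z - r)⁻¹) with htm
    have hcardt : Multiset.card tm = n := by
      rw [htm, Multiset.card_map, hs, hcardr, hdeg]
    have htre : ∀ x ∈ tm, 1/2 < x.re := by
      intro x hx
      obtain ⟨r, hr, rfl⟩ := Multiset.mem_map.mp hx
      have hzrne : z - r ≠ 0 := sub_ne_zero.mpr (hzr r hr)
      have hns : 0 < Complex.normSq (z - r) := Complex.normSq_pos.mpr hzrne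
      have habsr := hrabs r hr
      have hlt : Complex.normSq r < Complex.normSq z := by
        rw [← Complex.sq_norm, ← Complex.sq_norm]
        nlinarith [norm_nonneg r, norm_nonneg z]
      have hform : z*(z - r)⁻¹ = z/(z - r) := by ring
      rw [hform, Complex.div_re]
      rw [← add_div, lt_div_iff₀ hns]
      simp only [Complex.normSq_apply, Complex.sub_re, Complex.sub_im] at *
      nlinarith
    have hsumt : tm.sum = z*S := by
      rw [htm, hS, ← Multiset.sum_map_mul_left]
    have hsqt : (tm.map (fun x => x^2)).sum = z^2*S2 := by
      rw [htm, Multiset.map_map, hS2]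
      have : Multiset.map ((fun x => x^2) ∘ fun r => z*(z - r)⁻¹) s
          = Multiset.map (fun r => z^2 * ((z - r)⁻¹)^2) s := by
        apply Multiset.map_congr rfl
        intro r _
        simp only [Function.comp]
        rw [mul_pow]
      rw [this, ← Multiset.sum_map_mul_left]
    have hcore := core n hn lam0 lam1 lam2 hu tm hcardt htre
    apply hcore
    rw [hsumt, hsqt]
    linear_combination hFz
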